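/- Let G be a connected finite simple graph on n ≥ 2 vertices. Then Π₁(G) ≥ (n−1)², and equality holds if and only if G is isomorphic to the star S_n. -/

import Mathlib

open Finset

lemma myProd_ge {α : Type*} (s : Finset α) (f : α → ℕ)
    (hf : ∀ v ∈ s, 1 ≤ f v) : (∑ v ∈ s, (f v - 1)) + 1 ≤ ∏ v ∈ s, f v := by
  classical
  induction s using Finset.induction_on with
  | empty => simp
  | @insert a s ha ih =>
    rw [Finset.prod_insert ha, Finset.sum_insert ha]
    have h1 : 1 ≤ f a := hf a (Finset.mem_insert_self a s)
    have ihs := ih (fun v hv => hf v (Finset.mem_insert_of_mem hv))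
    set S := ∑ v ∈ s, (f v - 1) with hS
    set P := ∏ v ∈ s, f v with hP
    have hP1 : 1 ≤ P := le_trans (Nat.le_add_left 1 S) ihs
    obtain ⟨b, hb⟩ := Nat.exists_eq_add_of_le h1
    rw [hb]
    have hc : 1 + b - 1 = b := by omega
    rw [hc]
    nlinarith [ihs, hP1, Nat.mul_le_mul_left b hP1]

lemma myExistsAdj {V : Type*} [Fintype V] {G : SimpleGraph V} (hG : G.Connected)
    (h2 : 2 ≤ Fintype.card V) (v : V) : ∃ w, G.Adj v w := by
  obtain ⟨u, hu⟩ := Fintype.exists_ne_of_one_lt_card (by omega) v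
  obtain ⟨p⟩ := hG.preconnected v u
  cases p with
  | nil => exact absurd rfl hu
  | cons h q => exact ⟨_, h⟩

lemma myEdgesGe {V : Type*} [Fintype V] {G : SimpleGraph V} [DecidableEq V]
    [DecidableRel G.Adj] (hG : G.Connected) :
    Fintype.card V - 1 ≤ G.edgeFinset.card := by
  rcases isEmpty_or_nonempty V with h | h
  · simp [Fintype.card_eq_zero]
  obtain ⟨r⟩ := h
  have key : ∀ v : V, v ≠ r → ∃ w, G.Adj v w ∧ G.dist w r < G.dist v r := by
    intro v hv
    have hd : 0 < G.dist v r := hG.pos_dist_of_ne hv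
    obtain ⟨p, hp⟩ := (hG.preconnected v r).exists_walk_length_eq_dist
    cases p with
    | nil => simp at hp; exact absurd rfl hv
    | cons h q =>
      refine ⟨_, h, ?_⟩
      have hq := SimpleGraph.dist_le q
      rw [SimpleGraph.Walk.length_cons] at hp
      omega
  choose nxt hadj hlt using key
  have hcard : (Finset.univ.erase r).card = Fintype.card V - 1 := by
    rw [Finset.card_erase_of_mem (Finset.mem_univ r), Finset.card_univ]
  rw [← hcard]
  apply Finset.card_le_card_of_injOn
      (fun v => if h : v = r then s(v, v) else s(v, nxt v h))
  · intro v hv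
    have hv' : v ≠ r := (Finset.mem_erase.mp hv).1
    simp only [dif_neg hv', Finset.mem_coe]
    rw [SimpleGraph.mem_edgeFinset, SimpleGraph.mem_edgeSet]
    exact hadj v hv'
  · intro u hu v hv hfeq
    have hu' : u ≠ r := by simpa using hu
    have hv' : v ≠ r := by simpa using hv
    simp only [dif_neg hu', dif_neg hv'] at hfeq
    rw [Sym2.eq_iff] at hfeq
    rcases hfeq with ⟨h1, _⟩ | ⟨h1, h2⟩
    · exact h1
    · exfalso
      have l1 := hlt u hu'
      have l2 := hlt v hv'
      rw [h2] at l1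
      rw [← h1] at l2
      omega

lemma starDegInl (m : ℕ) [DecidableRel (completeBipartiteGraph Unit (Fin m)).Adj] (u : Unit) :
    (completeBipartiteGraph Unit (Fin m)).degree (Sum.inl u) = m := by
  have h : (completeBipartiteGraph Unit (Fin m)).neighborFinset (Sum.inl u)
      = Finset.univ.map ⟨Sum.inr, Sum.inr_injective⟩ := by
    ext w
    cases w <;> simp
  rw [SimpleGraph.degree, h, Finset.card_map, Finset.card_univ, Fintype.card_fin]

lemma starDegInr (m : ℕ) [DecidableRel (completeBipartiteGraph Unit (Fin m)).Adj] (i : Fin m) :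
    (completeBipartiteGraph Unit (Fin m)).degree (Sum.inr i) = 1 := by
  have h : (completeBipartiteGraph Unit (Fin m)).neighborFinset (Sum.inr i)
      = {Sum.inl ()} := by
    ext w
    cases w <;> simp
  rw [SimpleGraph.degree, h, Finset.card_singleton]

lemma degIso {V W : Type*} [Fintype V] [Fintype W] {G : SimpleGraph V} {G' : SimpleGraph W}
    [DecidableRel G.Adj] [DecidableRel G'.Adj] (f : G ≃g G') (v : V) :
    G.degree v = G'.degree (f v) := by
  rw [← SimpleGraph.card_neighborSet_eq_degree, ← SimpleGraph.card_neighborSet_eq_degree]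
  exact Fintype.card_congr (f.mapNeighborSet v)



/-- The first multiplicative Zagreb index `Π₁(G) = ∏_{u ∈ V(G)} d(u)²`. -/
noncomputable def multZagreb1 {V : Type*} [Fintype V] (G : SimpleGraph V) : ℕ :=
  letI := Classical.decRel G.Adj
  ∏ v : V, (G.degree v) ^ 2

/-- **Theorem 3 for `Π₁` (Wang).** A connected graph `G` on `n ≥ 2` vertices
satisfies `Π₁(G) ≥ (n-1)²`, with equality iff `G` is the star
`S_n = K_{1,n-1}`. -/
theorem multZagreb1_ge_star {V : Type*} [Fintype V] (n : ℕ) (hn : 2 ≤ n)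
    (G : SimpleGraph V) (hV : Fintype.card V = n) (hG : G.Connected) :
    (n - 1) ^ 2 ≤ multZagreb1 G ∧
      (multZagreb1 G = (n - 1) ^ 2 ↔
        Nonempty (G ≃g completeBipartiteGraph Unit (Fin (n - 1)))) := by
  letI : DecidableRel G.Adj := Classical.decRel G.Adj
  letI : DecidableEq V := Classical.decEq V
  have hd1 : ∀ v, 1 ≤ G.degree v := fun v =>
    (G.degree_pos_iff_exists_adj v).mpr (myExistsAdj hG (by omega) v)
  have hsum : ∑ v, G.degree v = 2 * G.edgeFinset.card :=
    SimpleGraph.sum_degrees_eq_twice_card_edges G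
  have hedge : n - 1 ≤ G.edgeFinset.card := hV ▸ myEdgesGe hG
  have hsplit : ∑ v, (G.degree v - 1) + n = ∑ v, G.degree v := by
    have h1 : ∑ v, G.degree v = ∑ v, ((G.degree v - 1) + 1) :=
      Finset.sum_congr rfl fun v _ => (Nat.sub_add_cancel (hd1 v)).symm
    rw [h1, Finset.sum_add_distrib, Finset.sum_const, Finset.card_univ, hV, smul_eq_mul,
      mul_one]
  have hS : n - 2 ≤ ∑ v, (G.degree v - 1) := by omega
  have hprodd : n - 1 ≤ ∏ v, G.degree v := by
    have h := myProd_ge (Finset.univ : Finset V) (fun v => G.degree v) (fun v _ => hd1 v)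
    omega
  have hMZ : multZagreb1 G = (∏ v, G.degree v) ^ 2 := by
    unfold multZagreb1
    exact Finset.prod_pow _ _ _
  constructor
  · rw [hMZ]
    exact Nat.pow_le_pow_left hprodd 2
  constructor
  · -- equality implies star
    intro heq
    rw [hMZ] at heq
    have hPeq : ∏ v, G.degree v = n - 1 :=
      Nat.pow_left_injective (by norm_num) heq
    -- at most one vertex of degree ≥ 2
    have hbig : ∀ u w : V, u ≠ w → 2 ≤ G.degree u → 2 ≤ G.degree w → False := by
      intro u w huw hu2 hw2
      have hwmem : w ∈ Finset.univ.erase u :=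
        Finset.mem_erase.mpr ⟨huw.symm, Finset.mem_univ w⟩
      have e1a := Finset.mul_prod_erase Finset.univ (fun v => G.degree v) (Finset.mem_univ u)
      have e1b := Finset.mul_prod_erase (Finset.univ.erase u) (fun v => G.degree v) hwmem
      have e1 : ∏ v, G.degree v
          = G.degree u * (G.degree w * ∏ v ∈ (Finset.univ.erase u).erase w, G.degree v) := by
        rw [← e1a, ← e1b]
      have e2a := Finset.add_sum_erase Finset.univ (fun v => G.degree v - 1) (Finset.mem_univ u)
      have e2b := Finset.add_sum_erase (Finset.univ.erase u) (fun v => G.degree v - 1) hwmem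
      have e2 : ∑ v, (G.degree v - 1)
          = (G.degree u - 1) + ((G.degree w - 1)
            + ∑ v ∈ (Finset.univ.erase u).erase w, (G.degree v - 1)) := by
        rw [← e2a, ← e2b]
      have hSP := myProd_ge ((Finset.univ.erase u).erase w) (fun v => G.degree v)
        (fun v _ => hd1 v)
      obtain ⟨a2, ha2⟩ : ∃ k, G.degree u = k + 2 := ⟨G.degree u - 2, by omega⟩
      obtain ⟨b2, hb2⟩ : ∃ k, G.degree w = k + 2 := ⟨G.degree w - 2, by omega⟩
      set S := ∑ v ∈ (Finset.univ.erase u).erase w, (G.degree v - 1) with hSdef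
      set P := ∏ v ∈ (Finset.univ.erase u).erase w, G.degree v with hPdef
      rw [hPeq] at e1
      rw [ha2, hb2] at e1 e2
      have e2' : ∑ v, (G.degree v - 1) = a2 + 1 + (b2 + 1 + S) := by omega
      have hn2 : n - 2 ≤ a2 + 1 + (b2 + 1 + S) := e2' ▸ hS
      have key : a2 + b2 + S + 4 ≤ (a2 + 2) * ((b2 + 2) * P) := by
        calc a2 + b2 + S + 4 ≤ (a2 + 2) * ((b2 + 2) * (S + 1)) := by
              have expand : (a2 + 2) * ((b2 + 2) * (S + 1))
                  = (a2 * b2 * S + a2 * b2 + 2 * (a2 * S) + 2 * (b2 * S))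
                    + (2 * a2 + 2 * b2 + 4 * S + 4) := by ring
              rw [expand]
              linarith [Nat.zero_le (a2 * b2 * S + a2 * b2 + 2 * (a2 * S) + 2 * (b2 * S))]
          _ ≤ (a2 + 2) * ((b2 + 2) * P) :=
            Nat.mul_le_mul le_rfl (Nat.mul_le_mul le_rfl hSP)
      omega
    -- find the center
    have hcenter : ∃ c : V, G.degree c = n - 1 ∧ ∀ v, v ≠ c → G.degree v = 1 := by
      by_cases hall : ∀ v, G.degree v = 1
      · have hP1 : ∏ v, G.degree v = 1 := Finset.prod_eq_one fun v _ => hall v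
        have hn2 : n = 2 := by omega
        have : Nonempty V := Fintype.card_pos_iff.mp (by omega)
        obtain ⟨c⟩ := this
        exact ⟨c, by rw [hall c]; omega, fun v _ => hall v⟩
      · push_neg at hall
        obtain ⟨c, hc⟩ := hall
        have hc2 : 2 ≤ G.degree c := by have := hd1 c; omega
        have hleaf : ∀ v, v ≠ c → G.degree v = 1 := by
          intro v hv
          by_contra hv1
          exact hbig v c hv (by have := hd1 v; omega) hc2
        have : ∏ v, G.degree v = G.degree c := by
          rw [← Finset.mul_prod_erase _ _ (Finset.mem_univ c)]
          rw [Finset.prod_eq_one fun v hv => hleaf v (Finset.mem_erase.mp hv).1, mul_one]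
        exact ⟨c, by omega, hleaf⟩
    obtain ⟨c, hcdeg, hleaf⟩ := hcenter
    -- c is adjacent to everything else
    have hnbr : G.neighborFinset c = Finset.univ.erase c := by
      apply Finset.eq_of_subset_of_card_le
      · intro w hw
        rw [SimpleGraph.mem_neighborFinset] at hw
        exact Finset.mem_erase.mpr ⟨(G.ne_of_adj hw).symm, Finset.mem_univ w⟩
      · rw [Finset.card_erase_of_mem (Finset.mem_univ c), Finset.card_univ, hV]
        rw [SimpleGraph.card_neighborFinset_eq_degree, hcdeg]
    have hadjall : ∀ v, v ≠ c → G.Adj c v := by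
      intro v hv
      rw [← SimpleGraph.mem_neighborFinset, hnbr]
      exact Finset.mem_erase.mpr ⟨hv, Finset.mem_univ v⟩
    have hchar : ∀ a b : V, G.Adj a b ↔ ((a = c ∧ b ≠ c) ∨ (b = c ∧ a ≠ c)) := by
      intro a b
      constructor
      · intro hab
        by_cases ha : a = c
        · exact Or.inl ⟨ha, fun hb => G.ne_of_adj hab (ha.trans hb.symm)⟩
        by_cases hb : b = c
        · exact Or.inr ⟨hb, ha⟩
        exfalso
        have hsub : ({b, c} : Finset V) ⊆ G.neighborFinset a := by
          intro x hx
          rcases Finset.mem_insert.mp hx with rfl | hx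
          · exact (SimpleGraph.mem_neighborFinset _ _ _).mpr hab
          · rw [Finset.mem_singleton] at hx
            subst hx
            exact (SimpleGraph.mem_neighborFinset _ _ _).mpr ((hadjall a ha).symm)
        have h2 : 2 ≤ G.degree a := by
          rw [← SimpleGraph.card_neighborFinset_eq_degree]
          calc 2 = ({b, c} : Finset V).card := by
                rw [Finset.card_insert_of_notMem (by simpa using hb), Finset.card_singleton]
            _ ≤ _ := Finset.card_le_card hsub
        rw [hleaf a ha] at h2
        omega
      · rintro (⟨ha, hb⟩ | ⟨hb, ha⟩)
        · subst ha; exact hadjall b hb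
        · subst hb; exact (hadjall a ha).symm
    -- build the isomorphism
    letI : DecidablePred (· = c) := fun x => Classical.dec _
    letI : Unique {x : V // x = c} := ⟨⟨⟨c, rfl⟩⟩, fun x => Subtype.ext x.2⟩
    have hcard2 : Fintype.card {x : V // ¬x = c} = n - 1 := by
      rw [Fintype.card_subtype_compl, hV, Fintype.card_subtype_eq]
    let e₂ : {x : V // ¬x = c} ≃ Fin (n - 1) := Fintype.equivFinOfCardEq hcard2
    let eU : {x : V // x = c} ≃ Unit := Equiv.equivPUnit _
    let e : V ≃ (Unit ⊕ Fin (n - 1)) :=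
      (Equiv.sumCompl (· = c)).symm.trans (Equiv.sumCongr eU e₂)
    have he_c : e c = Sum.inl () := by
      have h := Equiv.sumCompl_symm_apply_of_pos (p := (· = c)) (a := c) rfl
      simp [e, Equiv.trans_apply, h]
    have he_ne : ∀ x (hx : ¬x = c), e x = Sum.inr (e₂ ⟨x, hx⟩) := by
      intro x hx
      have h := Equiv.sumCompl_symm_apply_of_neg (p := (· = c)) (a := x) hx
      simp [e, Equiv.trans_apply, h]
    refine ⟨⟨e, ?_⟩⟩
    intro a b
    rw [hchar a b]
    by_cases ha : a = c <;> by_cases hb : b = c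
    · subst ha; subst hb
      rw [he_c]
      simp
    · subst ha
      rw [he_c, he_ne b hb]
      simp [hb]
    · subst hb
      rw [he_c, he_ne a ha]
      simp [ha]
    · rw [he_ne a ha, he_ne b hb]
      simp [ha, hb]
  · -- star implies equality
    rintro ⟨f⟩
    letI : DecidableRel (completeBipartiteGraph Unit (Fin (n - 1))).Adj :=
      Classical.decRel _
    have hdeg : ∀ v, G.degree v
        = (completeBipartiteGraph Unit (Fin (n - 1))).degree (f v) := fun v => degIso f v
    have h1 : multZagreb1 G
        = ∏ v, ((completeBipartiteGraph Unit (Fin (n - 1))).degree (f v)) ^ 2 := by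
      unfold multZagreb1
      exact Finset.prod_congr rfl fun v _ => by rw [hdeg v]
    rw [h1]
    rw [Fintype.prod_equiv f.toEquiv
      (fun v => ((completeBipartiteGraph Unit (Fin (n - 1))).degree (f v)) ^ 2)
      (fun w => ((completeBipartiteGraph Unit (Fin (n - 1))).degree w) ^ 2)
      (fun v => rfl)]
    rw [Fintype.prod_sum_type]
    simp [starDegInl, starDegInr]
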